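/- arXiv:2108.04113 — 2 statements merged into one kernel-verified Lean document; each statement's English description precedes it below -/
import Mathlib

section
/- Let a, b, p, q be complex numbers with p \neq 0, q \neq 0 and p^2 \neq 4q, let h be a nonnegative integer with V_h \neq 0, and let r be any integer. Then for all nonnegative integers m and n: \sum_{k=1}^{n} k^m w_{hk+r} / V_h^k = -\delta_{m,0} w_r - n^m w_{h(n+2)+r} / (q^h V_h^n) + (V_h/q^h)^{m+1} \sum_{j=0}^{m} A(m,j) w_{h(j+m+1)+r} / V_h^j - \sum_{s=1}^{m} \binom{m}{s} (n^{m-s}/q^{h(s+1)}) \sum_{j=1}^{s} A(s,j) w_{h(j+n+s+1)+r} / V_h^{j+n-s-1}, where \delta_{m,0} is the Kronecker delta and powers of V_h with negative integer exponents are defined since V_h \neq 0. -/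
/-- The Eulerian numbers `A(i,j) = ∑_{t=0}^{j} (-1)^t C(i+1,t) (j-t)^i`. -/
def eulerianA (i j : ℕ) : ℤ :=
  ∑ t ∈ Finset.range (j + 1), (-1 : ℤ) ^ t * (Nat.choose (i + 1) t) * ((j - t : ℕ) ^ i : ℤ)

open Finset in
lemma fd : ∀ N : ℕ, ∀ k : ℕ, k < N → ∀ x : ℂ,
    ∑ i ∈ range (N+1), (-1:ℂ)^i * (N.choose i : ℂ) * (x - i)^k = 0 := by
  intro N
  induction N with
  | zero => intro k hk; exact absurd hk (Nat.not_lt_zero k)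
  | succ N ih =>
    intro k hk x
    have hk' : k ≤ N := Nat.lt_succ_iff.mp hk
    have step1 : ∑ i ∈ range (N+1+1), (-1:ℂ)^i * ((N+1).choose i : ℂ) * (x - i)^k
        = (∑ i ∈ range (N+1), (-1:ℂ)^i * (N.choose i : ℂ) * (x - i)^k)
          - (∑ i ∈ range (N+1), (-1:ℂ)^i * (N.choose i : ℂ) * ((x-1) - i)^k) := by
      rw [Finset.sum_range_succ' (fun i => (-1:ℂ)^i * ((N+1).choose i : ℂ) * (x - i)^k) (N+1)]
      have e1 : ∀ i ∈ range (N+1),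
          (-1:ℂ)^(i+1) * ((N+1).choose (i+1) : ℂ) * (x - (↑(i+1):ℂ))^k
          = (-1:ℂ)^(i+1) * (N.choose (i+1) : ℂ) * (x - (↑(i+1):ℂ))^k
            + -((-1:ℂ)^i * (N.choose i : ℂ) * ((x-1) - (i:ℂ))^k) := by
        intro i _
        rw [Nat.choose_succ_succ]
        push_cast
        rw [show x - ((i:ℂ) + 1) = x - 1 - i by ring]
        ring
      rw [Finset.sum_congr rfl e1, Finset.sum_add_distrib]
      have e3 : ∑ i ∈ range (N+1+1), (-1:ℂ)^i * (N.choose i : ℂ) * (x - i)^k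
          = ∑ i ∈ range (N+1), (-1:ℂ)^(i+1) * (N.choose (i+1) : ℂ) * (x - (↑(i+1):ℂ))^k
            + (-1:ℂ)^0 * (N.choose 0 : ℂ) * (x - ((0:ℕ):ℂ))^k :=
        Finset.sum_range_succ' (fun i => (-1:ℂ)^i * (N.choose i : ℂ) * (x - i)^k) (N+1)
      have e4 : ∑ i ∈ range (N+1+1), (-1:ℂ)^i * (N.choose i : ℂ) * (x - i)^k
          = ∑ i ∈ range (N+1), (-1:ℂ)^i * (N.choose i : ℂ) * (x - i)^k := by
        rw [Finset.sum_range_succ]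
        simp
      rw [e4] at e3
      rw [Finset.sum_neg_distrib]
      simp only [Nat.choose_zero_right, Nat.cast_one] at e3 ⊢
      push_cast at e3 ⊢
      linear_combination -e3
    rw [step1]
    have e5 : ∀ i ∈ range (N+1),
        (-1:ℂ)^i * (N.choose i : ℂ) * (x - i)^k - (-1:ℂ)^i * (N.choose i : ℂ) * ((x-1) - i)^k
        = ∑ s ∈ range k, -((-1:ℂ)^(k-s) * (k.choose s : ℂ) * ((-1:ℂ)^i * (N.choose i : ℂ) * (x - i)^s)) := by
      intro i _
      have hb : ((x - i) + (-1))^k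
          = ∑ s ∈ range k, (x - (i:ℂ))^s * (-1:ℂ)^(k-s) * (k.choose s : ℂ)
            + (x - (i:ℂ))^k * (-1:ℂ)^(k-k) * (k.choose k : ℂ) := by
        rw [← Finset.sum_range_succ]; exact add_pow _ _ _
      simp only [Nat.sub_self, pow_zero, Nat.choose_self, Nat.cast_one, mul_one] at hb
      rw [show (x - 1 - (i:ℂ)) = (x - i) + (-1) by ring, hb, mul_add, Finset.mul_sum,
        Finset.sum_congr rfl (fun s _ => (by ring :
          -((-1:ℂ)^(k-s) * (k.choose s : ℂ) * ((-1:ℂ)^i * (N.choose i : ℂ) * (x - i)^s))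
          = -((-1:ℂ)^i * (N.choose i : ℂ) * ((x - (i:ℂ))^s * (-1:ℂ)^(k-s) * (k.choose s : ℂ))))),
        Finset.sum_neg_distrib]
      ring
    rw [← Finset.sum_sub_distrib, Finset.sum_congr rfl e5, Finset.sum_comm]
    apply Finset.sum_eq_zero
    intro s hs
    have h0 := ih s (lt_of_lt_of_le (mem_range.mp hs) hk') x
    calc ∑ i ∈ range (N+1), -((-1:ℂ)^(k-s) * (k.choose s : ℂ) * ((-1:ℂ)^i * (N.choose i : ℂ) * (x - i)^s))
        = -((-1:ℂ)^(k-s) * (k.choose s : ℂ) * ∑ i ∈ range (N+1), (-1:ℂ)^i * (N.choose i : ℂ) * (x - i)^s) := by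
          rw [Finset.mul_sum, ← Finset.sum_neg_distrib]
      _ = 0 := by rw [h0]; ring

open Finset

/-- shifted/partial Eulerian coefficients -/
noncomputable def Bc (M s j : ℕ) : ℂ :=
  ∑ i ∈ Finset.range (j+1), (-1:ℂ)^i * ((M+1).choose i : ℂ) * (((j - i : ℕ) : ℂ))^s

lemma Bc_eulerian (s j : ℕ) : Bc s s j = (eulerianA s j : ℂ) := by
  unfold Bc eulerianA
  push_cast
  rfl

lemma Bc_top (M s : ℕ) (hs : s ≤ M) : Bc M s (M+1) = 0 := by
  have h := fd (M+1) s (Nat.lt_succ_of_le hs) ((M+1 : ℕ) : ℂ)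
  rw [← h]
  unfold Bc
  apply Finset.sum_congr rfl
  intro i hi
  have hi' : i ≤ M+1 := Nat.lt_succ_iff.mp (mem_range.mp hi)
  rw [Nat.cast_sub hi']
lemma Bc_zero (M s : ℕ) : Bc M s 0 = ((0:ℕ):ℂ)^s := by
  unfold Bc; simp

lemma Bc_pascal (M s j : ℕ) : Bc (M+1) s (j+1) = Bc M s (j+1) - Bc M s j := by
  unfold Bc
  rw [Finset.sum_range_succ' (fun i => (-1:ℂ)^i * ((M+1+1).choose i : ℂ) * (((j+1 - i : ℕ) : ℂ))^s) (j+1),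
      Finset.sum_range_succ' (fun i => (-1:ℂ)^i * ((M+1).choose i : ℂ) * (((j+1 - i : ℕ) : ℂ))^s) (j+1)]
  have e1 : ∀ i ∈ range (j+1),
      (-1:ℂ)^(i+1) * ((M+1+1).choose (i+1) : ℂ) * (((j+1 - (i+1) : ℕ) : ℂ))^s
      = (-1:ℂ)^(i+1) * ((M+1).choose (i+1) : ℂ) * (((j+1 - (i+1) : ℕ) : ℂ))^s
        - (-1:ℂ)^i * ((M+1).choose i : ℂ) * (((j - i : ℕ) : ℂ))^s := by
    intro i _
    rw [Nat.choose_succ_succ (M+1) i]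
    have : j + 1 - (i+1) = j - i := by omega
    rw [this]
    push_cast
    ring
  rw [Finset.sum_congr rfl e1, Finset.sum_sub_distrib]
  simp only [Nat.choose_zero_right, Nat.cast_one]
  ring

lemma Gs (s M : ℕ) (h : s ≤ M) (z : ℂ) :
    (1-z)^(M-s) * ∑ j ∈ range (s+1), (eulerianA s j : ℂ) * z^j
      = ∑ j ∈ range (M+1), Bc M s j * z^j := by
  induction M, h using Nat.le_induction with
  | base =>
    rw [Nat.sub_self, pow_zero, one_mul]
    exact Finset.sum_congr rfl (fun j _ => by rw [Bc_eulerian])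
  | succ M hM ih =>
    have hss : M + 1 - s = (M - s) + 1 := by omega
    rw [hss, pow_succ, mul_comm ((1-z)^(M-s)) (1-z), mul_assoc, ih]
    -- goal : (1-z) * ∑_{j∈range(M+1)} Bc M s j * z^j = ∑_{j∈range(M+2)} Bc (M+1) s j * z^j
    rw [Finset.sum_range_succ' (fun j => Bc (M+1) s j * z^j) (M+1)]
    have e1 : ∀ j ∈ range (M+1), Bc (M+1) s (j+1) * z^(j+1)
        = Bc M s (j+1) * z^(j+1) - (Bc M s j * z^j) * z := by
      intro j _
      rw [Bc_pascal]
      ring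
    rw [Finset.sum_congr rfl e1, Finset.sum_sub_distrib]
    have e2 : ∑ j ∈ range (M+1), Bc M s (j+1) * z^(j+1)
        = ∑ j ∈ range (M+1), Bc M s j * z^j - Bc M s 0 * z^0 := by
      have e3 := Finset.sum_range_succ' (fun j => Bc M s j * z^j) (M+1)
      have e4 : ∑ j ∈ range (M+1+1), Bc M s j * z^j = ∑ j ∈ range (M+1), Bc M s j * z^j := by
        rw [Finset.sum_range_succ, Bc_top M s hM, zero_mul, add_zero]
      rw [e4] at e3
      linear_combination -e3
    rw [e2, ← Finset.sum_mul, Bc_zero, Bc_zero]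
    ring

noncomputable def Ax (m j : ℕ) (t : ℂ) : ℂ :=
  ∑ i ∈ Finset.range (j+1), (-1:ℂ)^i * ((m+1).choose i : ℂ) * (((j - i : ℕ) : ℂ) + t)^m

lemma Glem (m : ℕ) (z t : ℂ) :
    ∑ s ∈ range (m+1), (m.choose s : ℂ) * t^(m-s) *
        ((1-z)^(m-s) * ∑ j ∈ range (s+1), (eulerianA s j : ℂ) * z^j)
      = ∑ j ∈ range (m+1), Ax m j t * z^j := by
  have e1 : ∀ s ∈ range (m+1), (m.choose s : ℂ) * t^(m-s) *
        ((1-z)^(m-s) * ∑ j ∈ range (s+1), (eulerianA s j : ℂ) * z^j)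
      = ∑ j ∈ range (m+1), (m.choose s : ℂ) * t^(m-s) * (Bc m s j * z^j) := by
    intro s hs
    rw [Gs s m (Nat.lt_succ_iff.mp (mem_range.mp hs)) z, Finset.mul_sum]
  rw [Finset.sum_congr rfl e1, Finset.sum_comm]
  apply Finset.sum_congr rfl
  intro j _
  have e2 : ∀ s ∈ range (m+1), (m.choose s : ℂ) * t^(m-s) * (Bc m s j * z^j)
      = ∑ i ∈ range (j+1), ((-1:ℂ)^i * ((m+1).choose i : ℂ)
          * ((((j - i:ℕ)):ℂ)^s * t^(m-s) * (m.choose s : ℂ))) * z^j := by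
    intro s _
    unfold Bc
    rw [Finset.sum_mul, Finset.mul_sum]
    exact Finset.sum_congr rfl (fun i _ => by ring)
  rw [Finset.sum_congr rfl e2, Finset.sum_comm]
  unfold Ax
  rw [Finset.sum_mul]
  apply Finset.sum_congr rfl
  intro i _
  rw [add_pow ((((j - i:ℕ)):ℂ)) t m, Finset.mul_sum, Finset.sum_mul]

lemma Ax_top (m : ℕ) (t : ℂ) : Ax m m (t+1) = (-1:ℂ)^m * t^m := by
  have h := fd (m+1) m (Nat.lt_succ_self m) (t + ((m+1:ℕ):ℂ))
  rw [Finset.sum_range_succ] at h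
  rw [show (t + ((m+1:ℕ):ℂ)) - ((m+1:ℕ):ℂ) = t by ring] at h
  have e : ∀ i ∈ range (m+1), (-1:ℂ)^i * ((m+1).choose i : ℂ) * ((t + ((m+1:ℕ):ℂ)) - i)^m
      = (-1:ℂ)^i * ((m+1).choose i : ℂ) * (((m - i : ℕ):ℂ) + (t+1))^m := by
    intro i hi
    have hi' : i ≤ m := Nat.lt_succ_iff.mp (mem_range.mp hi)
    rw [Nat.cast_sub hi']
    rw [show ((m:ℂ) - i) + (t+1) = (t + ((m+1:ℕ):ℂ)) - i by push_cast; ring]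
  rw [Finset.sum_congr rfl e] at h
  unfold Ax
  simp only [Nat.choose_self, Nat.cast_one] at h
  linear_combination h

lemma star (m : ℕ) (z t : ℂ) :
    (∑ j ∈ range (m+1), Ax m j t * z^j) - z * (∑ j ∈ range (m+1), Ax m j (t+1) * z^j)
      = (1-z)^(m+1) * t^m := by
  have e1 : ∀ j ∈ range (m+1), Ax m j t * z^j
      = (∑ i ∈ range j, (-1:ℂ)^i * ((m+1).choose i : ℂ) * (((j - i : ℕ):ℂ) + t)^m) * z^j
        + ((-1:ℂ)^j * ((m+1).choose j : ℂ) * z^j) * t^m := by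
    intro j _
    unfold Ax
    rw [Finset.sum_range_succ, Nat.sub_self]
    push_cast
    ring
  rw [Finset.sum_congr rfl e1, Finset.sum_add_distrib, ← Finset.sum_mul]
  have e2 : ∑ j ∈ range (m+1),
        (∑ i ∈ range j, (-1:ℂ)^i * ((m+1).choose i : ℂ) * (((j - i : ℕ):ℂ) + t)^m) * z^j
      = ∑ j ∈ range m, Ax m j (t+1) * z^(j+1) := by
    rw [Finset.sum_range_succ' (fun j =>
      (∑ i ∈ range j, (-1:ℂ)^i * ((m+1).choose i : ℂ) * (((j - i : ℕ):ℂ) + t)^m) * z^j) m]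
    simp only [Finset.range_zero, Finset.sum_empty, zero_mul, add_zero]
    apply Finset.sum_congr rfl
    intro j _
    congr 1
    unfold Ax
    apply Finset.sum_congr rfl
    intro i hi
    have hij : i ≤ j := Nat.lt_succ_iff.mp (mem_range.mp hi)
    rw [show j + 1 - i = (j - i) + 1 by omega]
    push_cast
    ring_nf
  have e3 : z * ∑ j ∈ range (m+1), Ax m j (t+1) * z^j
      = ∑ j ∈ range m, Ax m j (t+1) * z^(j+1) + Ax m m (t+1) * z^(m+1) := by
    rw [Finset.mul_sum, Finset.sum_congr rfl
      (fun j _ => (by ring : z * (Ax m j (t+1) * z^j) = Ax m j (t+1) * z^(j+1))),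
      Finset.sum_range_succ]
  have hbin : ∑ j ∈ range (m+2), (-1:ℂ)^j * ((m+1).choose j : ℂ) * z^j = (1-z)^(m+1) := by
    rw [show (1:ℂ) - z = -z + 1 by ring, add_pow]
    apply Finset.sum_congr rfl
    intro j _
    rw [neg_pow]
    ring
  rw [Finset.sum_range_succ] at hbin
  simp only [Nat.choose_self, Nat.cast_one] at hbin
  rw [e2, e3, Ax_top]
  linear_combination t^m * hbin

lemma lemma1 (m : ℕ) (z : ℂ) : ∀ n : ℕ,
    (1-z)^(m+1) * ∑ k ∈ range n, (k:ℂ)^m * z^k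
      = (∑ j ∈ range (m+1), Ax m j 0 * z^j)
        - z^n * ∑ j ∈ range (m+1), Ax m j (n:ℂ) * z^j := by
  intro n
  induction n with
  | zero => simp
  | succ n ih =>
    rw [Finset.sum_range_succ, mul_add, ih]
    have hst := star m z (n:ℂ)
    rw [show ((n:ℂ) + 1) = ((n+1:ℕ):ℂ) by push_cast; ring] at hst
    linear_combination (-(z:ℂ)^n) * hst

lemma G0 (m : ℕ) (z : ℂ) :
    ∑ j ∈ range (m+1), Ax m j 0 * z^j
      = ∑ j ∈ range (m+1), (eulerianA m j : ℂ) * z^j := by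
  rw [← Glem m z 0, Finset.sum_eq_single m]
  · simp
  · intro b hb' hb
    have hbm : b ≤ m := Nat.lt_succ_iff.mp (mem_range.mp hb')
    rw [zero_pow (by omega : m - b ≠ 0)]
    ring
  · intro hm
    exact absurd (mem_range.mpr (Nat.lt_succ_self m)) hm

lemma Icc_shift (n : ℕ) (f : ℕ → ℂ) : ∑ k ∈ Icc 1 n, f k = ∑ k ∈ range n, f (k+1) := by
  rw [← Finset.Ico_add_one_right_eq_Icc, Finset.sum_Ico_eq_sum_range]
  exact Finset.sum_congr (by norm_num) (fun i _ => by rw [add_comm 1 i])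

lemma eulerianA_zero_right (s : ℕ) (hs : 1 ≤ s) : eulerianA s 0 = 0 := by
  unfold eulerianA
  rw [Finset.sum_range_one]
  simp [Nat.zero_pow]
  omega

lemma eulerianA_zero_zero : eulerianA 0 0 = 1 := by decide

lemma inner_conv (s : ℕ) (hs : 1 ≤ s) (z : ℂ) :
    ∑ j ∈ range (s+1), (eulerianA s j : ℂ) * z^j
      = ∑ j ∈ Icc 1 s, (eulerianA s j : ℂ) * z^j := by
  rw [Icc_shift s (fun j => (eulerianA s j : ℂ) * z^j),
     Finset.sum_range_succ' (fun j => (eulerianA s j : ℂ) * z^j) s]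
  rw [eulerianA_zero_right s hs]
  push_cast
  ring

lemma lemma2 (z : ℂ) (h1 : (1:ℂ) - z ≠ 0) (m n : ℕ) :
    ∑ k ∈ Icc 1 n, (k:ℂ)^m * z^k
      = -(if m = 0 then (1:ℂ) else 0)
        - (n:ℂ)^m * z^(n+1) / (1-z)
        + (∑ j ∈ range (m+1), (eulerianA m j : ℂ) * z^j) / (1-z)^(m+1)
        - ∑ s ∈ Icc 1 m, (m.choose s : ℂ) * (n:ℂ)^(m-s) * z^n *
            (∑ j ∈ Icc 1 s, (eulerianA s j : ℂ) * z^j) / (1-z)^(s+1) := by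
  have L1 := lemma1 m z n
  rw [G0, ← Glem m z (n:ℂ)] at L1
  -- e1 : Icc sum conversion
  have a1 := Icc_shift n (fun k => (k:ℂ)^m * z^k)
  have a2 := Finset.sum_range_succ' (fun k => (k:ℂ)^m * z^k) n
  have a3 := Finset.sum_range_succ (fun k => (k:ℂ)^m * z^k) n
  have e1 : ∑ k ∈ Icc 1 n, (k:ℂ)^m * z^k
      = ∑ k ∈ range n, (k:ℂ)^m * z^k + (n:ℂ)^m * z^n - (if m = 0 then (1:ℂ) else 0) := by
    rw [a1]
    have h0 : (((0:ℕ)):ℂ)^m * z^0 = (if m = 0 then (1:ℂ) else 0) := by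
      rcases Nat.eq_zero_or_pos m with hm | hm
      · simp [hm]
      · simp [zero_pow (by omega : m ≠ 0), if_neg (by omega : ¬ m = 0)]
    rw [h0] at a2
    linear_combination a3 - a2
  -- e2 : s-sum conversion
  have a7 : ∀ s ∈ range m, (m.choose (s+1) : ℂ) * (n:ℂ)^(m-(s+1)) *
        ((1-z)^(m-(s+1)) * ∑ j ∈ range ((s+1)+1), (eulerianA (s+1) j : ℂ) * z^j)
      = (m.choose (s+1) : ℂ) * (n:ℂ)^(m-(s+1)) *
        ((1-z)^(m-(s+1)) * ∑ j ∈ Icc 1 (s+1), (eulerianA (s+1) j : ℂ) * z^j) := by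
    intro s _
    rw [inner_conv (s+1) (by omega) z]
  have a6 := Finset.sum_range_succ' (fun s => (m.choose s : ℂ) * (n:ℂ)^(m-s) *
        ((1-z)^(m-s) * ∑ j ∈ range (s+1), (eulerianA s j : ℂ) * z^j)) m
  rw [Finset.sum_congr rfl a7] at a6
  rw [← Icc_shift m (fun s => (m.choose s : ℂ) * (n:ℂ)^(m-s) *
        ((1-z)^(m-s) * ∑ j ∈ Icc 1 s, (eulerianA s j : ℂ) * z^j))] at a6
  have hF0 : (m.choose 0 : ℂ) * (n:ℂ)^(m-0) * ((1-z)^(m-0) *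
        ∑ j ∈ range (0+1), (eulerianA 0 j : ℂ) * z^j) = (n:ℂ)^m * (1-z)^m := by
    rw [Finset.sum_range_one, eulerianA_zero_zero]
    simp only [Nat.sub_zero, Nat.choose_zero_right]
    push_cast
    ring
  rw [hF0] at a6
  -- a6 : Gs_form = ∑_{s∈Icc 1 m} G s + n^m (1-z)^m
  -- now rewrite the goal's s-sum
  have a8 : ∀ s ∈ Icc 1 m, (m.choose s : ℂ) * (n:ℂ)^(m-s) * z^n *
        (∑ j ∈ Icc 1 s, (eulerianA s j : ℂ) * z^j) / (1-z)^(s+1)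
      = (z^n * ((m.choose s : ℂ) * (n:ℂ)^(m-s) *
          ((1-z)^(m-s) * ∑ j ∈ Icc 1 s, (eulerianA s j : ℂ) * z^j))) / (1-z)^(m+1) := by
    intro s hs
    have hsm : s ≤ m := (Finset.mem_Icc.mp hs).2
    rw [div_eq_div_iff (pow_ne_zero _ h1) (pow_ne_zero _ h1),
       show m+1 = (s+1) + (m-s) by omega, pow_add]
    ring
  rw [Finset.sum_congr rfl a8, ← Finset.sum_div, ← Finset.mul_sum, e1]
  rw [a6] at L1
  set d : ℂ := (if m = 0 then (1:ℂ) else 0) with hd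
  generalize (∑ s ∈ Icc 1 m, (m.choose s : ℂ) * (n:ℂ)^(m-s) *
      ((1-z)^(m-s) * ∑ j ∈ Icc 1 s, (eulerianA s j : ℂ) * z^j)) = SA at L1 ⊢
  generalize (∑ j ∈ range (m+1), (eulerianA m j : ℂ) * z^j) = SB at L1 ⊢
  generalize (∑ k ∈ range n, (k:ℂ)^m * z^k) = SC at L1 ⊢
  field_simp
  linear_combination (1-z) * L1

lemma binet (p q α β A B : ℂ) (hq : q ≠ 0) (hα : α ≠ 0) (hβ : β ≠ 0)
    (eα : α^2 = p*α - q) (eβ : β^2 = p*β - q)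
    (w : ℤ → ℂ) (hw : ∀ j : ℤ, w j = p * w (j-1) - q * w (j-2))
    (h0 : w 0 = A + B) (h1 : w 1 = A*α + B*β) :
    ∀ j : ℤ, w j = A * α^j + B * β^j := by
  have hu : ∀ j : ℤ, A*α^j + B*β^j = p*(A*α^(j-1)+B*β^(j-1)) - q*(A*α^(j-2)+B*β^(j-2)) := by
    intro j
    have e1 : α^j = α^(j-2) * α^2 := by
      rw [sq, ← mul_assoc, ← zpow_add_one₀ hα (j-2), ← zpow_add_one₀ hα (j-2+1)]
      congr 1
      ring
    have e2 : α^(j-1) = α^(j-2) * α := by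
      rw [← zpow_add_one₀ hα (j-2)]
      congr 1
      ring
    have f1 : β^j = β^(j-2) * β^2 := by
      rw [sq, ← mul_assoc, ← zpow_add_one₀ hβ (j-2), ← zpow_add_one₀ hβ (j-2+1)]
      congr 1
      ring
    have f2 : β^(j-1) = β^(j-2) * β := by
      rw [← zpow_add_one₀ hβ (j-2)]
      congr 1
      ring
    rw [e1, e2, f1, f2, eα, eβ]
    ring
  suffices H : ∀ j : ℤ, (w j = A*α^j + B*β^j) ∧ (w (j+1) = A*α^(j+1) + B*β^(j+1)) from
    fun j => (H j).1
  intro j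
  induction j using Int.induction_on with
  | zero =>
    constructor
    · simpa using h0
    · simpa using h1
  | succ i ih =>
    refine ⟨ih.2, ?_⟩
    have hrec := hw ((i:ℤ)+1+1)
    rw [show ((i:ℤ)+1+1-1) = (i:ℤ)+1 by ring, show ((i:ℤ)+1+1-2) = (i:ℤ) by ring] at hrec
    have hu2 := hu ((i:ℤ)+1+1)
    rw [show ((i:ℤ)+1+1-1) = (i:ℤ)+1 by ring, show ((i:ℤ)+1+1-2) = (i:ℤ) by ring] at hu2
    rw [hrec, ih.1, ih.2]
    linear_combination -hu2
  | pred i ih =>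
    refine ⟨?_, by rw [show (-(i:ℤ)-1+1) = -(i:ℤ) by ring]; exact ih.1⟩
    have hrec := hw (-(i:ℤ)+1)
    rw [show (-(i:ℤ)+1-1) = -(i:ℤ) by ring, show (-(i:ℤ)+1-2) = -(i:ℤ)-1 by ring] at hrec
    have hu' := hu (-(i:ℤ)+1)
    rw [show (-(i:ℤ)+1-1) = -(i:ℤ) by ring, show (-(i:ℤ)+1-2) = -(i:ℤ)-1 by ring] at hu'
    have : q * w (-(i:ℤ)-1) = q * (A*α^(-(i:ℤ)-1) + B*β^(-(i:ℤ)-1)) := by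
      have g1 := ih.1
      have g2 := ih.2
      rw [show (-(i:ℤ)+1) = -(i:ℤ)+1 by ring] at hu'
      linear_combination hrec - hu' + p*g1 - g2
    exact mul_left_cancel₀ hq this

lemma key' (α β W Q c : ℂ) (hα : α ≠ 0) (hβ : β ≠ 0) (h : ℕ)
    (hWd : W = α^h + β^h) (hQd : Q = α*β) (hW : W ≠ 0) (r : ℤ) (m n : ℕ) :
    (∑ k ∈ Finset.Icc 1 n, (k : ℂ) ^ m * (c * α ^ ((h:ℤ) * (k:ℤ) + r)) / W ^ k) =
      -(if m = 0 then (1 : ℂ) else 0) * (c * α ^ r)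
        - (n : ℂ) ^ m * (c * α ^ ((h:ℤ) * ((n:ℤ) + 2) + r)) / (Q ^ h * W ^ n)
        + (W / Q ^ h) ^ (m + 1) *
            ∑ j ∈ Finset.range (m + 1),
              (eulerianA m j : ℂ) * (c * α ^ ((h:ℤ) * ((j:ℤ) + (m:ℤ) + 1) + r)) / W ^ j
        - ∑ s ∈ Finset.Icc 1 m, (m.choose s : ℂ) * ((n : ℂ) ^ (m - s) / Q ^ (h * (s + 1))) *
            ∑ j ∈ Finset.Icc 1 s,
              (eulerianA s j : ℂ) * (c * α ^ ((h:ℤ) * ((j:ℤ) + (n:ℤ) + (s:ℤ) + 1) + r)) /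
                W ^ ((j : ℤ) + (n:ℤ) - (s:ℤ) - 1) := by
  subst hWd hQd
  have hX : (α:ℂ)^h ≠ 0 := pow_ne_zero _ hα
  have hY : (β:ℂ)^h ≠ 0 := pow_ne_zero _ hβ
  have hαr : α ^ (r:ℤ) ≠ 0 := zpow_ne_zero r hα
  have h1z : (1:ℂ) - α^h/(α^h+β^h) = β^h/(α^h+β^h) := by field_simp; ring
  have h1z' : (1:ℂ) - α^h/(α^h+β^h) ≠ 0 := by
    rw [h1z]; exact div_ne_zero hY hW
  have L2 := lemma2 (α^h/(α^h+β^h)) h1z' m n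
  simp only [mul_pow, pow_mul]
  have T1 : ∀ k ∈ Icc 1 n, (k : ℂ) ^ m * (c * α ^ ((h:ℤ) * (k:ℤ) + r)) / (α^h+β^h) ^ k
      = (c * α ^ r) * ((k:ℂ)^m * (α^h/(α^h+β^h))^k) := by
    intro k _
    rw [show (h:ℤ) * (k:ℤ) + r = ((h*k : ℕ) : ℤ) + r by push_cast; ring,
       zpow_add₀ hα, zpow_natCast, pow_mul, div_pow]
    field_simp
  rw [Finset.sum_congr rfl T1, ← Finset.mul_sum]
  have T2 : (n : ℂ) ^ m * (c * α ^ ((h:ℤ) * ((n:ℤ) + 2) + r)) / (α^h * β^h * (α^h+β^h) ^ n)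
      = (c * α ^ r) * ((n:ℂ)^m * (α^h/(α^h+β^h))^(n+1) / (1 - α^h/(α^h+β^h))) := by
    rw [h1z, show (h:ℤ) * ((n:ℤ) + 2) + r = ((h*(n+2) : ℕ) : ℤ) + r by push_cast; ring,
       zpow_add₀ hα, zpow_natCast, pow_mul, div_pow]
    field_simp
    ring
  rw [T2]
  have T3 : ((α^h+β^h) / (α^h * β^h)) ^ (m + 1) *
        ∑ j ∈ Finset.range (m + 1),
          (eulerianA m j : ℂ) * (c * α ^ ((h:ℤ) * ((j:ℤ) + (m:ℤ) + 1) + r)) / (α^h+β^h) ^ j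
      = (c * α ^ r) * ((∑ j ∈ range (m+1), (eulerianA m j : ℂ) * (α^h/(α^h+β^h))^j)
          / (1 - α^h/(α^h+β^h))^(m+1)) := by
    have inner : ∀ j ∈ range (m+1),
        (eulerianA m j : ℂ) * (c * α ^ ((h:ℤ) * ((j:ℤ) + (m:ℤ) + 1) + r)) / (α^h+β^h) ^ j
        = ((α^h)^(m+1) * (c * α ^ r)) * ((eulerianA m j : ℂ) * (α^h/(α^h+β^h))^j) := by
      intro j _
      rw [show (h:ℤ) * ((j:ℤ) + (m:ℤ) + 1) + r = ((h*(j+m+1) : ℕ) : ℤ) + r by push_cast; ring,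
         zpow_add₀ hα, zpow_natCast, pow_mul, div_pow,
         show j+m+1 = j+(m+1) by ring, pow_add]
      field_simp
    rw [Finset.sum_congr rfl inner, ← Finset.mul_sum, h1z]
    generalize (∑ j ∈ range (m+1), (eulerianA m j : ℂ) * (α^h/(α^h+β^h))^j) = S
    simp only [div_pow, mul_pow]
    field_simp
  rw [T3]
  have T4 : ∀ s ∈ Icc 1 m,
      (m.choose s : ℂ) * ((n : ℂ) ^ (m - s) / ((α^h) ^ (s + 1) * (β^h) ^ (s + 1))) *
        ∑ j ∈ Finset.Icc 1 s,
          (eulerianA s j : ℂ) * (c * α ^ ((h:ℤ) * ((j:ℤ) + (n:ℤ) + (s:ℤ) + 1) + r)) /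
            (α^h+β^h) ^ ((j : ℤ) + (n:ℤ) - (s:ℤ) - 1)
      = (c * α ^ r) * ((m.choose s : ℂ) * (n:ℂ)^(m-s) * (α^h/(α^h+β^h))^n *
          (∑ j ∈ Icc 1 s, (eulerianA s j : ℂ) * (α^h/(α^h+β^h))^j)
            / (1 - α^h/(α^h+β^h))^(s+1)) := by
    intro s _
    have inner : ∀ j ∈ Icc 1 s,
        (eulerianA s j : ℂ) * (c * α ^ ((h:ℤ) * ((j:ℤ) + (n:ℤ) + (s:ℤ) + 1) + r)) /
            (α^h+β^h) ^ ((j : ℤ) + (n:ℤ) - (s:ℤ) - 1)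
        = ((α^h)^(n+s+1) * (c * α ^ r) * (α^h+β^h)^(s+1) / (α^h+β^h)^n) *
            ((eulerianA s j : ℂ) * (α^h/(α^h+β^h))^j) := by
      intro j _
      rw [show (j:ℤ) + (n:ℤ) - (s:ℤ) - 1 = ((j+n : ℕ) : ℤ) - ((s+1 : ℕ) : ℤ) by push_cast; ring,
         zpow_sub₀ hW, zpow_natCast, zpow_natCast,
         show (h:ℤ) * ((j:ℤ) + (n:ℤ) + (s:ℤ) + 1) + r = ((h*(j+n+s+1) : ℕ) : ℤ) + r by push_cast; ring,
         zpow_add₀ hα, zpow_natCast, pow_mul, div_pow,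
         show j+n+s+1 = j+(n+s+1) by ring, pow_add, pow_add]
      field_simp
      ring
    rw [Finset.sum_congr rfl inner, ← Finset.mul_sum, h1z]
    generalize (∑ j ∈ Icc 1 s, (eulerianA s j : ℂ) * (α^h/(α^h+β^h))^j) = S
    simp only [div_pow, mul_pow]
    field_simp
    ring
  rw [Finset.sum_congr rfl T4, ← Finset.mul_sum]
  linear_combination (c * α ^ r) * L2

theorem horadam_weighted_sum_polynomial_form (a b p q : ℂ)
    (hp : p ≠ 0) (hq : q ≠ 0) (hpq : p ^ 2 ≠ 4 * q)
    (w : ℤ → ℂ) (hw0 : w 0 = a) (hw1 : w 1 = b)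
    (hw : ∀ j : ℤ, w j = p * w (j - 1) - q * w (j - 2))
    (V : ℤ → ℂ) (hV0 : V 0 = 2) (hV1 : V 1 = p)
    (hV : ∀ j : ℤ, V j = p * V (j - 1) - q * V (j - 2))
    (h : ℕ) (hVh : V h ≠ 0) (r : ℤ) :
    ∀ m n : ℕ,
      (∑ k ∈ Finset.Icc 1 n, (k : ℂ) ^ m * w (h * k + r) / V h ^ k) =
        -(if m = 0 then (1 : ℂ) else 0) * w r
          - (n : ℂ) ^ m * w (h * (n + 2) + r) / (q ^ h * V h ^ n)
          + (V h / q ^ h) ^ (m + 1) *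
              ∑ j ∈ Finset.range (m + 1), (eulerianA m j : ℂ) * w (h * (j + m + 1) + r) / V h ^ j
          - ∑ s ∈ Finset.Icc 1 m, (m.choose s : ℂ) * ((n : ℂ) ^ (m - s) / q ^ (h * (s + 1))) *
              ∑ j ∈ Finset.Icc 1 s, (eulerianA s j : ℂ) * w (h * (j + n + s + 1) + r) /
                V h ^ ((j : ℤ) + n - s - 1) := by
  intro m n
  obtain ⟨d, hd⟩ := IsAlgClosed.exists_pow_nat_eq (p^2 - 4*q) (by norm_num : 0 < 2)
  have hdne : d ≠ 0 := by
    intro h0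
    rw [h0] at hd
    simp only [ne_eq, zero_pow, OfNat.ofNat_ne_zero, not_false_eq_true] at hd
    exact (sub_ne_zero.mpr hpq) hd.symm
  obtain ⟨α, β, hsum, hprod, hdiff⟩ : ∃ α β : ℂ, α + β = p ∧ α * β = q ∧ α - β = d :=
    ⟨(p+d)/2, (p-d)/2, by ring, by linear_combination (-(1:ℂ)/4) * hd, by ring⟩
  have hαne : α ≠ 0 := fun h0 => hq (by rw [← hprod, h0, zero_mul])
  have hβne : β ≠ 0 := fun h0 => hq (by rw [← hprod, h0, mul_zero])
  have eα : α^2 = p*α - q := by linear_combination α*hsum - hprod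
  have eβ : β^2 = p*β - q := by linear_combination β*hsum - hprod
  have hdiffne : α - β ≠ 0 := by rw [hdiff]; exact hdne
  have hwB := binet p q α β ((b - a*β)/(α-β)) ((a*α - b)/(α-β)) hq hαne hβne eα eβ w hw
    (by rw [hw0]; field_simp; ring) (by rw [hw1]; field_simp; ring)
  have hVB := binet p q α β 1 1 hq hαne hβne eα eβ V hV (by rw [hV0]; norm_num)
    (by rw [hV1]; linear_combination -hsum)
  have hVh_eq : V ((h:ℕ):ℤ) = α^h + β^h := by
    rw [hVB ((h:ℕ):ℤ), zpow_natCast, zpow_natCast]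
    ring
  have keyA := key' α β (V ((h:ℕ):ℤ)) q ((b - a*β)/(α-β)) hαne hβne h hVh_eq hprod.symm hVh r m n
  have keyB := key' β α (V ((h:ℕ):ℤ)) q ((a*α - b)/(α-β)) hβne hαne h
    (by rw [hVh_eq]; ring) (by rw [← hprod]; ring) hVh r m n
  have mul_addC : ∀ (x y z : ℂ), x * (y + z) = x * y + x * z := mul_add
  simp only [hwB, mul_addC, add_div, Finset.sum_add_distrib]
  linear_combination keyA + keyB
end

section
/- Let a, b, p, q be complex numbers with p \neq 0, q \neq 0 and p^2 \neq 4q, let h be a nonnegative integer with 1 - V_h + q^h \neq 0, and let r be any integer. Then for all nonnegative integers m and n: \sum_{k=1}^{n} k^m w_{hk+r} = -\delta_{m,0} w_r - n^m (w_{h(n+1)+r} - q^h w_{hn+r})/(1 - V_h + q^h) + (1/(1 - V_h + q^h)^{m+1}) \sum_{c=0}^{m+1} (-1)^c \binom{m+1}{c} q^{hc} \sum_{j=0}^{m} A(m,j) w_{h(j-c)+r} - \sum_{s=1}^{m} \binom{m}{s} (n^{m-s}/(1 - V_h + q^h)^{s+1}) \sum_{c=0}^{s+1} (-1)^c \binom{s+1}{c}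 q^{hc} \sum_{j=0}^{s} A(s,j) w_{h(j-c+n)+r}, where \delta_{m,0} is the Kronecker delta. -/
open Finset

/-- alternating sum of binomials times powers vanishes when exponent < top -/
lemma van2 : ∀ e N : ℕ, e < N →
    ∑ t ∈ range (N + 1), (-1 : ℤ) ^ t * (N.choose t) * (t : ℤ) ^ e = 0 := by
  intro e
  induction e using Nat.strong_induction_on with
  | _ e IH =>
    intro N hN
    match e with
    | 0 =>
      have := Int.alternating_sum_range_choose_of_ne (n := N) (by omega)
      calc ∑ t ∈ range (N + 1), (-1 : ℤ) ^ t * (N.choose t) * (t : ℤ) ^ 0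
          = ∑ t ∈ range (N + 1), (-1 : ℤ) ^ t * (N.choose t) := by
            apply sum_congr rfl; intro t _; ring
        _ = 0 := this
    | e + 1 =>
      obtain ⟨N', rfl⟩ : ∃ N', N = N' + 1 := ⟨N - 1, by omega⟩
      rw [Finset.sum_range_succ'] 
      simp only [Nat.cast_zero]
      rw [zero_pow (by omega), mul_zero, add_zero]
      have key : ∀ u : ℕ, (-1:ℤ) ^ (u+1) * ((N'+1).choose (u+1)) * ((u:ℤ)+1) ^ (e+1)
          = -((N'+1:ℤ)) * ((-1:ℤ)^u * (N'.choose u) * ((u:ℤ)+1)^e) := by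
        intro u
        have hc : ((N'+1).choose (u+1) : ℤ) * (u+1) = (N'+1) * (N'.choose u) := by
          exact_mod_cast (Nat.add_one_mul_choose_eq N' u).symm
        have : ((u:ℤ)+1)^(e+1) = ((u:ℤ)+1)^e * ((u:ℤ)+1) := by ring
        rw [this, pow_succ]
        calc (-1:ℤ) ^ u * -1 * ((N'+1).choose (u+1)) * (((u:ℤ)+1) ^ e * ((u:ℤ)+1))
            = -((-1:ℤ)^u * (((N'+1).choose (u+1) : ℤ) * ((u:ℤ)+1)) * ((u:ℤ)+1)^e) := by ring
          _ = _ := by rw [show (((N'+1).choose (u+1) : ℤ) * ((u:ℤ)+1)) = ((N'+1:ℤ)) * (N'.choose u) by exact_mod_cast hc]; ring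
      calc ∑ u ∈ range (N' + 1), (-1:ℤ)^(u+1) * ((N'+1).choose (u+1)) * ((u:ℤ)+1)^(e+1)
          = ∑ u ∈ range (N' + 1), -((N'+1:ℤ)) * ((-1:ℤ)^u * (N'.choose u) * ((u:ℤ)+1)^e) := by
            apply sum_congr rfl; intro u _; exact key u
        _ = -((N'+1:ℤ)) * ∑ u ∈ range (N' + 1), (-1:ℤ)^u * (N'.choose u) * ((u:ℤ)+1)^e := by
            rw [Finset.mul_sum]
        _ = 0 := by
            have inner : ∑ u ∈ range (N' + 1), (-1:ℤ)^u * (N'.choose u) * ((u:ℤ)+1)^e = 0 := by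
              have expand : ∀ u : ℕ, ((u:ℤ)+1)^e = ∑ i ∈ range (e+1), (u:ℤ)^i * (e.choose i) := by
                intro u
                rw [add_pow]
                apply sum_congr rfl; intro i _; ring
              calc ∑ u ∈ range (N' + 1), (-1:ℤ)^u * (N'.choose u) * ((u:ℤ)+1)^e
                  = ∑ u ∈ range (N' + 1), ∑ i ∈ range (e+1),
                      (e.choose i : ℤ) * ((-1:ℤ)^u * (N'.choose u) * (u:ℤ)^i) := by
                    apply sum_congr rfl; intro u _
                    rw [expand u, Finset.mul_sum]
                    apply sum_congr rfl; intro i _; ring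
                _ = ∑ i ∈ range (e+1), (e.choose i : ℤ) *
                      ∑ u ∈ range (N' + 1), (-1:ℤ)^u * (N'.choose u) * (u:ℤ)^i := by
                    rw [Finset.sum_comm]
                    apply sum_congr rfl; intro i _
                    rw [Finset.mul_sum]
                _ = 0 := by
                    apply Finset.sum_eq_zero; intro i hi
                    have hi' : i < e + 1 := mem_range.mp hi
                    rw [IH i (by omega) N' (by omega), mul_zero]
            rw [inner, mul_zero]

lemma vanish (s d : ℕ) (hd : s < d) :
    ∑ t ∈ range (s + 2), (-1 : ℤ) ^ t * ((s+1).choose t) * ((d : ℤ) - t) ^ s = 0 := by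
  have expand : ∀ t : ℕ, ((d:ℤ) - t)^s
      = ∑ i ∈ range (s+1), (s.choose i : ℤ) * (d:ℤ)^(s-i) * (-1:ℤ)^i * (t:ℤ)^i := by
    intro t
    rw [sub_eq_add_neg, add_comm, add_pow]
    apply sum_congr rfl; intro i hi
    rw [neg_pow]
    ring
  calc ∑ t ∈ range (s + 2), (-1 : ℤ) ^ t * ((s+1).choose t) * ((d : ℤ) - t) ^ s
      = ∑ t ∈ range (s + 2), ∑ i ∈ range (s+1),
          ((s.choose i : ℤ) * (d:ℤ)^(s-i) * (-1:ℤ)^i) * ((-1:ℤ)^t * ((s+1).choose t) * (t:ℤ)^i) := by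
        apply sum_congr rfl; intro t _
        rw [expand t, Finset.mul_sum]
        apply sum_congr rfl; intro i _; ring
    _ = ∑ i ∈ range (s+1), ∑ t ∈ range (s+2),
          ((s.choose i : ℤ) * (d:ℤ)^(s-i) * (-1:ℤ)^i) * ((-1:ℤ)^t * ((s+1).choose t) * (t:ℤ)^i) := by
        rw [Finset.sum_comm]
    _ = ∑ i ∈ range (s+1), ((s.choose i : ℤ) * (d:ℤ)^(s-i) * (-1:ℤ)^i) *
          ∑ t ∈ range (s+2), (-1:ℤ)^t * ((s+1).choose t) * (t:ℤ)^i := by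
        apply sum_congr rfl; intro i _
        rw [Finset.mul_sum]
    _ = 0 := by
        apply Finset.sum_eq_zero; intro i hi
        rw [van2 i (s+1) (by simp at hi; omega), mul_zero]

noncomputable def fps (s : ℕ) : PowerSeries ℂ := PowerSeries.mk fun t => (t : ℂ) ^ s

noncomputable def Spoly (s : ℕ) : Polynomial ℂ :=
  ∑ j ∈ range (s + 1), Polynomial.C ((eulerianA s j : ℤ) : ℂ) * Polynomial.X ^ j

lemma factB (s : ℕ) : (Spoly s : PowerSeries ℂ) = (1 - PowerSeries.X) ^ (s + 1) * fps s := by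
  ext d
  have hlhs : (PowerSeries.coeff d) (Spoly s : PowerSeries ℂ)
      = if d ≤ s then ((eulerianA s d : ℤ) : ℂ) else 0 := by
    rw [Polynomial.coeff_coe, Spoly, Polynomial.finset_sum_coeff]
    simp only [Polynomial.coeff_C_mul, Polynomial.coeff_X_pow]
    have : (∑ x ∈ range (s + 1), ((eulerianA s x : ℤ) : ℂ) * if d = x then 1 else 0)
        = ∑ x ∈ range (s + 1), if x = d then ((eulerianA s x : ℤ) : ℂ) else 0 := by
      apply sum_congr rfl; intro x _
      by_cases hxd : x = d
      · subst hxd; simp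
      · rw [if_neg hxd, if_neg (fun hdx => hxd hdx.symm), mul_zero]
    rw [this, Finset.sum_ite_eq' (range (s+1)) d (fun j => ((eulerianA s j : ℤ) : ℂ))]
    simp [Nat.lt_succ_iff]
  have hpow : ((1 - PowerSeries.X : PowerSeries ℂ) ^ (s + 1))
      = ∑ t ∈ range (s + 2), PowerSeries.C ((-1 : ℂ) ^ t * ((s+1).choose t)) * PowerSeries.X ^ t := by
    rw [sub_eq_add_neg, add_comm, add_pow]
    apply sum_congr rfl; intro t ht
    rw [map_mul, map_pow, map_neg, map_one, map_natCast, neg_pow]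
    ring
  rw [hpow, Finset.sum_mul]
  rw [map_sum]
  have hterm : ∀ t ∈ range (s + 2),
      (PowerSeries.coeff d) (PowerSeries.C ((-1 : ℂ) ^ t * ((s+1).choose t)) * PowerSeries.X ^ t * fps s)
      = (-1 : ℂ) ^ t * ((s+1).choose t) * (if t ≤ d then ((d - t : ℕ) : ℂ) ^ s else 0) := by
    intro t _
    rw [mul_assoc, PowerSeries.coeff_C_mul]
    congr 1
    rw [mul_comm (PowerSeries.X ^ t) (fps s), PowerSeries.coeff_mul_X_pow']
    by_cases hts : t ≤ d
    · rw [if_pos hts, if_pos hts, fps, PowerSeries.coeff_mk]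
    · rw [if_neg hts, if_neg hts]
  rw [Finset.sum_congr rfl hterm, hlhs]
  by_cases hds : d ≤ s
  · -- all t ≤ d terms survive; matches eulerianA s d
    have : ∑ t ∈ range (s + 2), (-1 : ℂ) ^ t * ((s+1).choose t) * (if t ≤ d then ((d - t : ℕ) : ℂ) ^ s else 0)
        = ∑ t ∈ range (d + 1), (-1 : ℂ) ^ t * ((s+1).choose t) * ((d - t : ℕ) : ℂ) ^ s := by
      rw [← Finset.sum_subset (Finset.range_subset_range.mpr (by omega : d + 1 ≤ s + 2))]
      · apply sum_congr rfl; intro t ht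
        rw [if_pos (by simpa [Nat.lt_succ_iff] using ht)]
      · intro t _ ht
        rw [if_neg (by simp [Nat.lt_succ_iff] at ht; omega), mul_zero]
    rw [if_pos hds, this, eulerianA]
    push_cast [Int.cast_sum]
    apply sum_congr rfl; intro t _
    push_cast
    ring
  · rw [if_neg hds]
    have hall : ∑ t ∈ range (s + 2), (-1 : ℂ) ^ t * ((s+1).choose t) * (if t ≤ d then ((d - t : ℕ) : ℂ) ^ s else 0)
        = ∑ t ∈ range (s + 2), (-1 : ℂ) ^ t * ((s+1).choose t) * ((d : ℂ) - t) ^ s := by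
      apply sum_congr rfl; intro t ht
      simp only [mem_range] at ht
      rw [if_pos (by omega : t ≤ d), Nat.cast_sub (by omega : t ≤ d)]
    symm
    rw [hall]
    have hv := vanish s d (by omega)
    exact_mod_cast congrArg (Int.cast : ℤ → ℂ) hv

lemma factA (s : ℕ) : fps s = PowerSeries.X * (∑ i ∈ range (s + 1),
    PowerSeries.C ((s.choose i : ℕ) : ℂ) * fps i) + (if s = 0 then 1 else 0) := by
  ext d
  rcases d with _ | d
  · simp only [map_add]
    rw [fps]
    rw [PowerSeries.coeff_zero_eq_constantCoeff]
    simp only [map_mul, PowerSeries.constantCoeff_X, zero_mul]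
    rw [PowerSeries.constantCoeff_mk]
    by_cases hs : s = 0 <;> simp [hs]
  · simp only [map_add]
    rw [PowerSeries.coeff_succ_X_mul, map_sum]
    have : ∀ i ∈ range (s+1), (PowerSeries.coeff d) (PowerSeries.C ((s.choose i : ℕ) : ℂ) * fps i)
        = (s.choose i : ℂ) * (d : ℂ) ^ i := by
      intro i _
      rw [PowerSeries.coeff_C_mul, fps, PowerSeries.coeff_mk]
    rw [Finset.sum_congr rfl this]
    have hone : (PowerSeries.coeff (d+1)) (if s = 0 then (1:PowerSeries ℂ) else 0) = 0 := by
      by_cases hs : s = 0 <;> simp [hs, PowerSeries.coeff_one]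
    rw [hone, add_zero, fps, PowerSeries.coeff_mk]
    push_cast
    rw [add_pow (d : ℂ) 1 s]
    apply sum_congr rfl; intro i _
    ring

lemma L2poly (s : ℕ) (hs : 1 ≤ s) :
    Spoly s = Polynomial.X * ∑ i ∈ range (s + 1),
      Polynomial.C ((s.choose i : ℕ) : ℂ) * Spoly i * (1 - Polynomial.X) ^ (s - i) := by
  rw [← Polynomial.coe_inj]
  have hcoe : ((Polynomial.X * ∑ i ∈ range (s + 1),
      Polynomial.C ((s.choose i : ℕ) : ℂ) * Spoly i * (1 - Polynomial.X) ^ (s - i) : Polynomial ℂ) : PowerSeries ℂ)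
      = PowerSeries.X * ∑ i ∈ range (s + 1),
        PowerSeries.C ((s.choose i : ℕ) : ℂ) * (Spoly i : PowerSeries ℂ) * (1 - PowerSeries.X) ^ (s - i) := by
    rw [← Polynomial.coeToPowerSeries.ringHom_apply, map_mul, map_sum]
    simp only [map_mul, map_pow, map_sub, map_one, Polynomial.coeToPowerSeries.ringHom_apply,
      Polynomial.coe_X, Polynomial.coe_C]
  rw [hcoe]
  calc (↑(Spoly s) : PowerSeries ℂ) = (1 - PowerSeries.X) ^ (s+1) * fps s := factB s
    _ = (1 - PowerSeries.X) ^ (s+1) * (PowerSeries.X * ∑ i ∈ range (s + 1),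
          PowerSeries.C ((s.choose i : ℕ) : ℂ) * fps i) := by
        rw [factA s, if_neg (by omega), add_zero]
    _ = PowerSeries.X * ∑ i ∈ range (s + 1),
          PowerSeries.C ((s.choose i : ℕ) : ℂ) * ((1 - PowerSeries.X) ^ (i+1) * fps i) * (1 - PowerSeries.X) ^ (s - i) := by
        rw [Finset.mul_sum, Finset.mul_sum, Finset.mul_sum]
        apply sum_congr rfl; intro i hi
        have hle : i ≤ s := by simpa [Nat.lt_succ_iff] using hi
        have hpows : ((1 : PowerSeries ℂ) - PowerSeries.X) ^ (i+1) * ((1 : PowerSeries ℂ) - PowerSeries.X) ^ (s - i)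
            = ((1 : PowerSeries ℂ) - PowerSeries.X) ^ (s+1) := by
          rw [← pow_add]
          congr 1
          omega
        rw [← hpows]
        ring
    _ = PowerSeries.X * ∑ i ∈ range (s + 1),
          PowerSeries.C ((s.choose i : ℕ) : ℂ) * (Spoly i : PowerSeries ℂ) * (1 - PowerSeries.X) ^ (s - i) := by
        congr 1
        apply sum_congr rfl; intro i _
        rw [← factB i]

noncomputable def Sc (y : ℂ) (s : ℕ) : ℂ := ∑ j ∈ range (s+1), ((eulerianA s j : ℤ) : ℂ) * y ^ j

lemma Sc_eval (y : ℂ) (s : ℕ) : Sc y s = (Spoly s).eval y := by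
  rw [Sc, Spoly, Polynomial.eval_finset_sum]
  apply sum_congr rfl; intro j _
  simp

lemma Sc_zero (y : ℂ) : Sc y 0 = 1 := by
  simp [Sc, eulerianA]

lemma L2c (y : ℂ) (s : ℕ) (hs : 1 ≤ s) :
    Sc y s = y * ∑ i ∈ range (s + 1), (s.choose i : ℂ) * Sc y i * (1 - y) ^ (s - i) := by
  have := congrArg (Polynomial.eval y) (L2poly s hs)
  rw [Polynomial.eval_mul, Polynomial.eval_X, Polynomial.eval_finset_sum] at this
  rw [Sc_eval, this]
  congr 1
  apply sum_congr rfl; intro i _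
  rw [Polynomial.eval_mul, Polynomial.eval_mul, Polynomial.eval_pow, Polynomial.eval_sub,
    Polynomial.eval_one, Polynomial.eval_X, Polynomial.eval_C, Sc_eval]

lemma L1 (e : ℕ → ℂ) (x : ℂ) (m : ℕ) :
    ∑ s ∈ range (m + 1), (m.choose s : ℂ) * x ^ (m - s) *
        (∑ i ∈ range (s + 1), (s.choose i : ℂ) * e i)
      = ∑ s ∈ range (m + 1), (m.choose s : ℂ) * (x + 1) ^ (m - s) * e s := by
  have step1 : ∀ s ∈ range (m + 1),
      (m.choose s : ℂ) * x ^ (m - s) * (∑ i ∈ range (s + 1), (s.choose i : ℂ) * e i)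
      = ∑ i ∈ range (m + 1), (if i ≤ s then (m.choose s : ℂ) * (s.choose i : ℂ) * x ^ (m - s) * e i else 0) := by
    intro s hs
    have hsm : s + 1 ≤ m + 1 := by simpa [Nat.lt_succ_iff] using hs
    rw [← Finset.sum_subset (Finset.range_subset_range.mpr hsm)
      (by intro i _ hi; rw [if_neg]; simp [Nat.lt_succ_iff] at hi; omega)]
    rw [Finset.mul_sum]
    apply sum_congr rfl; intro i hi
    rw [if_pos (by simpa [Nat.lt_succ_iff] using hi)]
    ring
  rw [Finset.sum_congr rfl step1, Finset.sum_comm]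
  apply sum_congr rfl; intro i hi
  have him : i ≤ m := by simpa [Nat.lt_succ_iff] using hi
  have step2 : ∑ s ∈ range (m + 1), (if i ≤ s then (m.choose s : ℂ) * (s.choose i : ℂ) * x ^ (m - s) * e i else 0)
      = ∑ s ∈ Finset.Ico i (m + 1), (m.choose s : ℂ) * (s.choose i : ℂ) * x ^ (m - s) * e i := by
    rw [← Finset.sum_subset (by intro t ht; simp at ht ⊢; omega : Finset.Ico i (m+1) ⊆ range (m+1))
      (by intro t h1 ht; rw [if_neg]; simp at h1 ht; omega)]
    apply sum_congr rfl; intro t ht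
    rw [if_pos (by simp at ht; omega)]
  rw [step2, Finset.sum_Ico_eq_sum_range]
  have step3 : ∀ t ∈ range (m + 1 - i),
      ((m.choose (i + t)) : ℂ) * ((i + t).choose i : ℂ) * x ^ (m - (i + t)) * e i
      = (m.choose i : ℂ) * ((m - i).choose t : ℂ) * x ^ ((m - i) - t) * e i := by
    intro t ht
    have htm : i + t ≤ m := by simp at ht; omega
    have hcc : (m.choose (i + t)) * ((i + t).choose i) = m.choose i * (m - i).choose t := by
      have := Nat.choose_mul (n := m) (k := i + t) (s := i) (by omega)
      simpa using this
    have : ((m.choose (i + t)) : ℂ) * ((i + t).choose i : ℂ) = (m.choose i : ℂ) * ((m - i).choose t : ℂ) := by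
      exact_mod_cast congrArg (Nat.cast : ℕ → ℂ) hcc
    rw [show m - (i + t) = (m - i) - t by omega, ← this]
  rw [Finset.sum_congr rfl step3]
  have hbin : (x + 1) ^ (m - i) = ∑ t ∈ range ((m - i) + 1), ((m - i).choose t : ℂ) * x ^ ((m - i) - t) := by
    rw [add_comm x 1, add_pow]
    apply sum_congr rfl; intro t _
    rw [one_pow]; ring
  rw [show m + 1 - i = (m - i) + 1 by omega]
  rw [hbin, Finset.mul_sum, Finset.sum_mul]
  apply sum_congr rfl; intro t _
  ring

lemma star_s19 (y : ℂ) (hy : (1:ℂ) - y ≠ 0) (m n : ℕ) :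
    ∑ s ∈ range (m+1), (m.choose s : ℂ) * (n:ℂ)^(m-s) * Sc y s / (1-y)^(s+1)
    = y * (∑ s ∈ range (m+1), (m.choose s : ℂ) * ((n:ℂ)+1)^(m-s) * Sc y s / (1-y)^(s+1))
      + (n:ℂ)^m := by
  set e : ℕ → ℂ := fun i => y * Sc y i / (1-y)^(i+1) with hedef
  have he : ∀ i, e i = y * Sc y i / (1-y)^(i+1) := fun i => rfl
  have hL2' : ∀ s : ℕ, ∑ i ∈ range (s+1), (s.choose i : ℂ) * e i
      = Sc y s / (1-y)^(s+1) - (if s = 0 then 1 else 0) := by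
    intro s
    rcases Nat.eq_zero_or_pos s with hs | hs
    · subst hs
      rw [range_one, sum_singleton, he 0, Sc_zero, if_pos rfl]
      simp only [Nat.choose_self, Nat.cast_one, pow_one, one_mul, mul_one]
      field_simp
      ring
    · rw [if_neg (by omega), sub_zero, L2c y s hs]
      rw [Finset.mul_sum, Finset.sum_div]
      apply sum_congr rfl; intro i hi
      have hle : i ≤ s := by simpa [Nat.lt_succ_iff] using hi
      have hpows : ((1:ℂ)-y)^(s-i) * ((1:ℂ)-y)^(i+1) = ((1:ℂ)-y)^(s+1) := by
        rw [← pow_add]; congr 1; omega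
      rw [he i, eq_div_iff (pow_ne_zero _ hy), ← hpows]
      field_simp
  have key := L1 e (n:ℂ) m
  simp only [hL2'] at key
  have hsplit : ∑ s ∈ range (m+1), (m.choose s : ℂ) * (n:ℂ)^(m-s) *
      (Sc y s / (1-y)^(s+1) - (if s = 0 then 1 else 0))
      = ∑ s ∈ range (m+1), (m.choose s : ℂ) * (n:ℂ)^(m-s) * Sc y s / (1-y)^(s+1)
        - ∑ s ∈ range (m+1), (m.choose s : ℂ) * (n:ℂ)^(m-s) * (if s = 0 then 1 else 0) := by
    rw [← Finset.sum_sub_distrib]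
    apply sum_congr rfl; intro s _
    ring
  have hdelta : ∑ s ∈ range (m+1), (m.choose s : ℂ) * (n:ℂ)^(m-s) * (if s = 0 then 1 else 0)
      = (n:ℂ)^m := by
    rw [Finset.sum_eq_single_of_mem 0 (by simp)]
    · simp
    · intro s _ hs; rw [if_neg hs, mul_zero]
  rw [hsplit, hdelta] at key
  have hre : y * (∑ s ∈ range (m+1), (m.choose s : ℂ) * ((n:ℂ)+1)^(m-s) * Sc y s / (1-y)^(s+1))
      = ∑ s ∈ range (m+1), (m.choose s : ℂ) * ((n:ℂ)+1)^(m-s) * e s := by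
    rw [Finset.mul_sum]
    apply sum_congr rfl; intro s _
    rw [he]
    ring
  rw [hre, ← key]
  ring

lemma scalar (y : ℂ) (hy : (1:ℂ) - y ≠ 0) (m : ℕ) : ∀ n : ℕ,
    ∑ k ∈ Finset.Icc 1 n, (k:ℂ)^m * y^k
      = -(if m = 0 then (1:ℂ) else 0)
        - (n:ℂ)^m * y^(n+1) / (1-y)
        + Sc y m / (1-y)^(m+1)
        - ∑ s ∈ Finset.Icc 1 m, (m.choose s : ℂ) *
            ((n:ℂ)^(m-s) * y^n * Sc y s / (1-y)^(s+1)) := by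
  have hSig : ∀ n : ℕ, ∑ s ∈ Finset.Icc 1 m, (m.choose s : ℂ) *
        ((n:ℂ)^(m-s) * y^n * Sc y s / (1-y)^(s+1))
      = y^n * (∑ s ∈ range (m+1), (m.choose s : ℂ) * (n:ℂ)^(m-s) * Sc y s / (1-y)^(s+1))
        - y^n * (n:ℂ)^m / (1-y) := by
    intro n
    rw [Finset.mul_sum, Finset.sum_range_succ']
    simp only [Nat.choose_zero_right, Nat.cast_one, Nat.sub_zero, one_mul, Sc_zero, pow_one]
    rw [← Finset.Ico_add_one_right_eq_Icc, Finset.sum_Ico_eq_sum_range]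
    rw [show m + 1 - 1 = m by omega]
    have : ∑ i ∈ range m, (m.choose (1+i) : ℂ) *
        ((n:ℂ)^(m-(1+i)) * y^n * Sc y (1+i) / (1-y)^((1+i)+1))
        = ∑ i ∈ range m, y^n * ((m.choose (i+1) : ℂ) * (n:ℂ)^(m-(i+1)) * Sc y (i+1) / (1-y)^(i+1+1)) := by
      apply sum_congr rfl; intro i _
      rw [show 1 + i = i + 1 by omega]
      ring
    rw [this]
    ring
  intro n
  induction n with
  | zero =>
    rw [show ((0:ℕ):ℂ) = 0 by norm_num] 
    rw [Finset.Icc_eq_empty (by omega), Finset.sum_empty]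
    rcases Nat.eq_zero_or_pos m with hm | hm
    · subst hm
      rw [Finset.Icc_eq_empty (by omega), Finset.sum_empty, if_pos rfl, Sc_zero]
      field_simp
      ring
    · rw [if_neg (by omega), zero_pow (by omega)]
      have : ∑ s ∈ Finset.Icc 1 m, (m.choose s : ℂ) *
          ((0:ℂ)^(m-s) * y^(0:ℕ) * Sc y s / (1-y)^(s+1))
          = Sc y m / (1-y)^(m+1) := by
        rw [Finset.sum_eq_single_of_mem m (by simp [Finset.mem_Icc]; omega)]
        · simp
        · intro s hs hsm
          rw [zero_pow (by simp [Finset.mem_Icc] at hs; omega)]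
          simp
      rw [this]
      ring
  | succ n IH =>
    rw [Finset.sum_Icc_succ_top (by omega : 1 ≤ n + 1), IH]
    have hs1 := star_s19 y hy m n
    rw [hSig n, hSig (n+1)]
    have hd : ((1:ℂ)-y) * ((1:ℂ)-y)⁻¹ = 1 := mul_inv_cancel₀ hy
    push_cast
    linear_combination (-(y:ℂ)^n) * hs1 + (((n:ℂ)^m - y*(1+(n:ℂ))^m) * y^n) * hd

lemma rec_unique (p q : ℂ) (hq : q ≠ 0) (f g : ℤ → ℂ)
    (hf : ∀ j : ℤ, f j = p * f (j-1) - q * f (j-2))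
    (hg : ∀ j : ℤ, g j = p * g (j-1) - q * g (j-2))
    (h0 : f 0 = g 0) (h1 : f 1 = g 1) : ∀ j : ℤ, f j = g j := by
  have key : ∀ j : ℤ, f j = g j ∧ f (j+1) = g (j+1) := by
    intro j
    induction j using Int.induction_on with
    | zero => exact ⟨h0, by norm_num [h1]⟩
    | succ i ih =>
      refine ⟨ih.2, ?_⟩
      have hfi := hf ((i:ℤ)+1+1)
      have hgi := hg ((i:ℤ)+1+1)
      rw [show ((i:ℤ)+1+1-1) = (i:ℤ)+1 by ring, show ((i:ℤ)+1+1-2) = (i:ℤ) by ring] at hfi hgi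
      rw [hfi, hgi, ih.1, ih.2]
    | pred i ih =>
      refine ⟨?_, by rw [show (-(i:ℤ)-1+1) = -(i:ℤ) by ring]; exact ih.1⟩
      have hfi := hf (-(i:ℤ)+1)
      have hgi := hg (-(i:ℤ)+1)
      rw [show (-(i:ℤ)+1-1) = -(i:ℤ) by ring, show (-(i:ℤ)+1-2) = -(i:ℤ)-1 by ring] at hfi hgi
      have h2 : q * f (-(i:ℤ)-1) = q * g (-(i:ℤ)-1) := by
        have := ih.2
        rw [show (-(i:ℤ)+1) = -(i:ℤ)+1 by ring] at this
        have e1 : f (-(i:ℤ)+1) = g (-(i:ℤ)+1) := by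
          convert this using 3 <;> ring
        rw [e1, ih.1] at hfi
        linear_combination hfi - hgi
      have := mul_left_cancel₀ hq h2
      convert this using 2 <;> ring
  exact fun j => (key j).1

lemma geom_rec (p q x : ℂ) (hx : x ≠ 0) (hroot : x^2 = p*x - q) :
    ∀ j : ℤ, x ^ j = p * x ^ (j-1) - q * x ^ (j-2) := by
  intro j
  have e0 : x ^ j = x ^ (j-2) * x^2 := by
    rw [← zpow_natCast x 2, ← zpow_add₀ hx]
    congr 1; ring
  have e1 : x ^ (j-1) = x ^ (j-2) * x ^ (1:ℤ) := by
    rw [← zpow_add₀ hx]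
    congr 1; ring
  rw [e0, e1, hroot, zpow_one]
  ring

lemma perRoot (x z : ℂ) (hx : x ≠ 0) (h : ℕ) (hxh : (1:ℂ) - x^h ≠ 0)
    (hzh : (1:ℂ) - z^h ≠ 0) (r : ℤ) (m n : ℕ) :
    ∑ k ∈ Finset.Icc 1 n, (k : ℂ) ^ m * x ^ ((h:ℤ) * (k:ℤ) + r)
      = -(if m = 0 then (1:ℂ) else 0) * x ^ r
        - (n:ℂ)^m * ((x ^ ((h:ℤ) * ((n:ℤ) + 1) + r) - (x*z)^h * x^((h:ℤ)*(n:ℤ)+r)) /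
            ((1 - x^h)*(1 - z^h)))
        + (1 / ((1 - x^h)*(1 - z^h)) ^ (m+1)) *
            ∑ c ∈ range (m+2), (-1:ℂ)^c * ((m+1).choose c : ℂ) * (x*z)^(h*c) *
              ∑ j ∈ range (m+1), ((eulerianA m j : ℤ) : ℂ) * x ^ ((h:ℤ) * ((j:ℤ) - (c:ℤ)) + r)
        - ∑ s ∈ Finset.Icc 1 m, (m.choose s : ℂ) *
            ((n:ℂ)^(m-s) / ((1 - x^h)*(1 - z^h))^(s+1)) *
            ∑ c ∈ range (s+2), (-1:ℂ)^c * ((s+1).choose c : ℂ) * (x*z)^(h*c) *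
              ∑ j ∈ range (s+1), ((eulerianA s j : ℤ) : ℂ) *
                x ^ ((h:ℤ) * ((j:ℤ) - (c:ℤ) + (n:ℤ)) + r) := by
  set y : ℂ := x ^ h with hydef
  set u : ℂ := z ^ h with hudef
  have hy0 : y ≠ 0 := pow_ne_zero _ hx
  have hxp : ∀ t : ℤ, x ^ ((h:ℤ) * t + r) = y ^ t * x ^ r := by
    intro t
    rw [zpow_add₀ hx, zpow_mul, zpow_natCast]
  -- collapse of the double (c,j)-sums
  have hbin : ∀ s : ℕ, ((1:ℂ) - u)^(s+1)
      = ∑ c ∈ range (s+2), (-1:ℂ)^c * ((s+1).choose c : ℂ) * u^c := by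
    intro s
    rw [sub_eq_add_neg, add_comm, add_pow]
    apply sum_congr rfl; intro c _
    rw [neg_pow, one_pow]
    ring
  have hcoef : ∀ (c : ℕ), (x*z)^(h*c) * y ^ (-(c:ℤ)) = u ^ c := by
    intro c
    rw [mul_pow, pow_mul x h c, pow_mul z h c]
    rw [zpow_neg, zpow_natCast]
    rw [show (x^h)^c * (z^h)^c * (y^c)⁻¹ = ((x^h)^c * (y^c)⁻¹) * (z^h)^c by ring]
    rw [← hydef, mul_inv_cancel₀ (pow_ne_zero _ hy0), one_mul, hudef]
  have collapse : ∀ (s : ℕ) (τ : ℤ),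
      ∑ c ∈ range (s+2), (-1:ℂ)^c * ((s+1).choose c : ℂ) * (x*z)^(h*c) *
        ∑ j ∈ range (s+1), ((eulerianA s j : ℤ) : ℂ) * x ^ ((h:ℤ) * ((j:ℤ) - (c:ℤ) + τ) + r)
      = ((1:ℂ) - u)^(s+1) * Sc y s * y ^ τ * x ^ r := by
    intro s τ
    have inner : ∀ c : ℕ, ∑ j ∈ range (s+1), ((eulerianA s j : ℤ) : ℂ) *
        x ^ ((h:ℤ) * ((j:ℤ) - (c:ℤ) + τ) + r)
        = Sc y s * y ^ (-(c:ℤ)) * y ^ τ * x ^ r := by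
      intro c
      rw [Sc, Finset.sum_mul, Finset.sum_mul, Finset.sum_mul]
      apply sum_congr rfl; intro j _
      rw [hxp ((j:ℤ) - (c:ℤ) + τ)]
      rw [show ((j:ℤ) - (c:ℤ) + τ) = (j:ℤ) + (-(c:ℤ)) + τ by ring]
      rw [zpow_add₀ hy0, zpow_add₀ hy0, zpow_natCast]
      ring
    calc ∑ c ∈ range (s+2), (-1:ℂ)^c * ((s+1).choose c : ℂ) * (x*z)^(h*c) *
          ∑ j ∈ range (s+1), ((eulerianA s j : ℤ) : ℂ) * x ^ ((h:ℤ) * ((j:ℤ) - (c:ℤ) + τ) + r)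
        = ∑ c ∈ range (s+2), (-1:ℂ)^c * ((s+1).choose c : ℂ) * u^c * (Sc y s * y ^ τ * x ^ r) := by
          apply sum_congr rfl; intro c _
          rw [inner c, ← hcoef c]
          ring
      _ = ((1:ℂ) - u)^(s+1) * Sc y s * y ^ τ * x ^ r := by
          rw [← Finset.sum_mul, ← hbin s]
          ring
  have collapse0 : ∀ (s : ℕ),
      ∑ c ∈ range (s+2), (-1:ℂ)^c * ((s+1).choose c : ℂ) * (x*z)^(h*c) *
        ∑ j ∈ range (s+1), ((eulerianA s j : ℤ) : ℂ) * x ^ ((h:ℤ) * ((j:ℤ) - (c:ℤ)) + r)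
      = ((1:ℂ) - u)^(s+1) * Sc y s * x ^ r := by
    intro s
    have := collapse s 0
    rw [zpow_zero, mul_one] at this
    rw [← this]
    apply sum_congr rfl; intro c _
    congr 1
    apply sum_congr rfl; intro j _
    rw [show ((j:ℤ) - (c:ℤ) + 0) = ((j:ℤ) - (c:ℤ)) by ring]
  -- LHS
  have hL : ∑ k ∈ Finset.Icc 1 n, (k : ℂ) ^ m * x ^ ((h:ℤ) * (k:ℤ) + r)
      = (∑ k ∈ Finset.Icc 1 n, (k:ℂ)^m * y^k) * x ^ r := by
    rw [Finset.sum_mul]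
    apply sum_congr rfl; intro k _
    rw [hxp (k:ℤ), zpow_natCast]
    ring
  -- 4th term
  have h4 : ∑ s ∈ Finset.Icc 1 m, (m.choose s : ℂ) *
        ((n:ℂ)^(m-s) / ((1 - x^h)*(1 - z^h))^(s+1)) *
        ∑ c ∈ range (s+2), (-1:ℂ)^c * ((s+1).choose c : ℂ) * (x*z)^(h*c) *
          ∑ j ∈ range (s+1), ((eulerianA s j : ℤ) : ℂ) * x ^ ((h:ℤ) * ((j:ℤ) - (c:ℤ) + (n:ℤ)) + r)
      = (∑ s ∈ Finset.Icc 1 m, (m.choose s : ℂ) *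
          ((n:ℂ)^(m-s) * y^n * Sc y s / (1-y)^(s+1))) * x ^ r := by
    rw [Finset.sum_mul]
    apply sum_congr rfl; intro s _
    rw [collapse s (n:ℤ), zpow_natCast]
    rw [mul_pow]
    rw [← hydef, ← hudef]
    field_simp
  have h3 : (1 / ((1 - x^h)*(1 - z^h)) ^ (m+1)) *
        ∑ c ∈ range (m+2), (-1:ℂ)^c * ((m+1).choose c : ℂ) * (x*z)^(h*c) *
          ∑ j ∈ range (m+1), ((eulerianA m j : ℤ) : ℂ) * x ^ ((h:ℤ) * ((j:ℤ) - (c:ℤ)) + r)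
      = (Sc y m / (1-y)^(m+1)) * x ^ r := by
    rw [collapse0 m, mul_pow]
    rw [← hydef, ← hudef]
    field_simp
  have h2 : x ^ ((h:ℤ) * ((n:ℤ) + 1) + r) - (x*z)^h * x^((h:ℤ)*(n:ℤ)+r)
      = y^(n+1) * (1 - u) * x ^ r := by
    rw [hxp ((n:ℤ)+1), hxp (n:ℤ)]
    rw [show ((n:ℤ)+1) = ((n+1:ℕ):ℤ) by push_cast; ring]
    rw [zpow_natCast, zpow_natCast, mul_pow]
    rw [hudef, hydef]
    ring
  rw [hL, scalar y hxh m n, h4, h3, h2]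
  have hd2 : (n:ℂ)^m * ((y^(n+1) * (1 - u) * x ^ r) / ((1 - x^h)*(1 - z^h)))
      = ((n:ℂ)^m * y^(n+1) / (1-y)) * x ^ r := by
    rw [← hydef, ← hudef]
    field_simp
  rw [hd2]
  ring

theorem horadam_arith_prog_sum_polynomial_form (a b p q : ℂ)
    (hp : p ≠ 0) (hq : q ≠ 0) (hpq : p ^ 2 ≠ 4 * q)
    (w : ℤ → ℂ) (hw0 : w 0 = a) (hw1 : w 1 = b)
    (hw : ∀ j : ℤ, w j = p * w (j - 1) - q * w (j - 2))
    (V : ℤ → ℂ) (hV0 : V 0 = 2) (hV1 : V 1 = p)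
    (hV : ∀ j : ℤ, V j = p * V (j - 1) - q * V (j - 2))
    (h : ℕ) (hVh : 1 - V h + q ^ h ≠ 0) (r : ℤ) :
    ∀ m n : ℕ,
      (∑ k ∈ Finset.Icc 1 n, (k : ℂ) ^ m * w (h * k + r)) =
        -(if m = 0 then (1 : ℂ) else 0) * w r
          - (n : ℂ) ^ m * ((w (h * (n + 1) + r) - q ^ h * w (h * n + r)) / (1 - V h + q ^ h))
          + (1 / (1 - V h + q ^ h) ^ (m + 1)) *
              ∑ c ∈ Finset.range (m + 2), (-1 : ℂ) ^ c * ((m + 1).choose c : ℂ) * q ^ (h * c) *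
                ∑ j ∈ Finset.range (m + 1), (eulerianA m j : ℂ) * w (h * ((j : ℤ) - c) + r)
          - ∑ s ∈ Finset.Icc 1 m, (m.choose s : ℂ) *
              ((n : ℂ) ^ (m - s) / (1 - V h + q ^ h) ^ (s + 1)) *
              ∑ c ∈ Finset.range (s + 2), (-1 : ℂ) ^ c * ((s + 1).choose c : ℂ) * q ^ (h * c) *
                ∑ j ∈ Finset.range (s + 1), (eulerianA s j : ℂ) *
                  w (h * ((j : ℤ) - c + n) + r) := by
  intro m n
  -- square root of the discriminant
  obtain ⟨sq, hsq⟩ := IsAlgClosed.exists_pow_nat_eq (k := ℂ) (p^2 - 4*q) (n := 2) (by omega)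
  set α : ℂ := (p + sq)/2 with hαdef
  set β : ℂ := (p - sq)/2 with hβdef
  have hsum : α + β = p := by rw [hαdef, hβdef]; ring
  have hprod : α * β = q := by rw [hαdef, hβdef]; linear_combination (-(1:ℂ)/4) * hsq
  have hsq0 : sq ≠ 0 := by
    intro hc
    apply hpq
    rw [hc] at hsq
    linear_combination -hsq
  have hne : α - β ≠ 0 := by
    rw [hαdef, hβdef]
    intro hc
    apply hsq0
    linear_combination hc
  have hα0 : α ≠ 0 := by
    intro hc
    apply hq
    rw [← hprod, hc, zero_mul]
  have hβ0 : β ≠ 0 := by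
    intro hc
    apply hq
    rw [← hprod, hc, mul_zero]
  have hrootα : α^2 = p*α - q := by linear_combination α * hsum - hprod
  have hrootβ : β^2 = p*β - q := by linear_combination β * hsum - hprod
  -- coefficients of the closed form
  obtain ⟨A, B, hAB0, hAB1⟩ : ∃ A B : ℂ, A + B = a ∧ A*α + B*β = b :=
    ⟨(b - a*β)/(α-β), (a*α - b)/(α-β), by field_simp; ring, by field_simp; ring⟩
  have hwf : ∀ j : ℤ, w j = A * α^j + B * β^j := by
    apply rec_unique p q hq w _ hw
    · intro j
      linear_combination A * geom_rec p q α hα0 hrootα j + B * geom_rec p q β hβ0 hrootβ j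
    · simp only [zpow_zero, mul_one]
      rw [hw0, ← hAB0]
    · simp only [zpow_one]
      rw [hw1, ← hAB1]
  have hVf : ∀ j : ℤ, V j = α^j + β^j := by
    apply rec_unique p q hq V _ hV
    · intro j
      linear_combination geom_rec p q α hα0 hrootα j + geom_rec p q β hβ0 hrootβ j
    · simp only [zpow_zero]
      rw [hV0]; norm_num
    · simp only [zpow_one]
      rw [hV1, hsum]
  have hVh' : V (h:ℤ) = α^h + β^h := by
    rw [hVf, zpow_natCast, zpow_natCast]
  have hqprod : q = α * β := hprod.symm
  have hD : (1:ℂ) - V h + q^h = (1 - α^h)*(1 - β^h) := by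
    rw [hVh', hqprod, mul_pow]
    ring
  have hDne : ((1:ℂ) - α^h)*(1 - β^h) ≠ 0 := hD ▸ hVh
  have hden1 : (1:ℂ) - α^h ≠ 0 := (mul_ne_zero_iff.mp hDne).1
  have hden2 : (1:ℂ) - β^h ≠ 0 := (mul_ne_zero_iff.mp hDne).2
  have PRα := perRoot α β hα0 h hden1 hden2 r m n
  have PRβ := perRoot β α hβ0 h hden2 hden1 r m n
  simp only [mul_comm ((1:ℂ) - β^h) ((1:ℂ) - α^h)] at PRβ
  simp only [show β * α = α * β from mul_comm β α] at PRβ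
  -- rewrite goal
  simp only [hD]
  simp only [hqprod, hwf]
  -- split the sums
  have hsplit1 : ∑ k ∈ Finset.Icc 1 n, (k : ℂ) ^ m * (A * α^((h:ℤ) * (k:ℤ) + r) + B * β^((h:ℤ) * (k:ℤ) + r))
      = A * (∑ k ∈ Finset.Icc 1 n, (k : ℂ) ^ m * α ^ ((h:ℤ) * (k:ℤ) + r))
        + B * (∑ k ∈ Finset.Icc 1 n, (k : ℂ) ^ m * β ^ ((h:ℤ) * (k:ℤ) + r)) := by
    rw [Finset.mul_sum, Finset.mul_sum, ← Finset.sum_add_distrib]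
    apply sum_congr rfl; intro k _; ring
  have hsplitJ : ∀ (s : ℕ) (g : ℕ → ℤ), ∑ j ∈ range (s+1), ((eulerianA s j : ℤ) : ℂ) *
        (A * α^(g j) + B * β^(g j))
      = A * (∑ j ∈ range (s+1), ((eulerianA s j : ℤ) : ℂ) * α^(g j))
        + B * (∑ j ∈ range (s+1), ((eulerianA s j : ℤ) : ℂ) * β^(g j)) := by
    intro s g
    rw [Finset.mul_sum, Finset.mul_sum, ← Finset.sum_add_distrib]
    apply sum_congr rfl; intro j _; ring
  have hsplitC : ∀ (s : ℕ) (g : ℕ → ℕ → ℤ), ∑ c ∈ range (s+2),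
        ((-1:ℂ)^c * ((s+1).choose c : ℂ) * (α*β)^(h*c) *
          ∑ j ∈ range (s+1), ((eulerianA s j : ℤ) : ℂ) * (A * α^(g c j) + B * β^(g c j)))
      = A * (∑ c ∈ range (s+2), (-1:ℂ)^c * ((s+1).choose c : ℂ) * (α*β)^(h*c) *
          ∑ j ∈ range (s+1), ((eulerianA s j : ℤ) : ℂ) * α^(g c j))
        + B * (∑ c ∈ range (s+2), (-1:ℂ)^c * ((s+1).choose c : ℂ) * (α*β)^(h*c) *
          ∑ j ∈ range (s+1), ((eulerianA s j : ℤ) : ℂ) * β^(g c j)) := by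
    intro s g
    rw [Finset.mul_sum, Finset.mul_sum, ← Finset.sum_add_distrib]
    apply sum_congr rfl; intro c _
    rw [hsplitJ s (g c)]
    ring
  have hsplit4 : ∑ s ∈ Finset.Icc 1 m, ((m.choose s : ℂ) *
        ((n : ℂ) ^ (m - s) / (((1:ℂ) - α^h)*(1 - β^h)) ^ (s + 1)) *
        ∑ c ∈ range (s + 2), (-1 : ℂ) ^ c * ((s + 1).choose c : ℂ) * (α*β) ^ (h * c) *
          ∑ j ∈ range (s + 1), ((eulerianA s j : ℤ) : ℂ) *
            (A * α^((h:ℤ) * ((j : ℤ) - (c:ℤ) + (n:ℤ)) + r) + B * β^((h:ℤ) * ((j : ℤ) - (c:ℤ) + (n:ℤ)) + r)))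
      = A * (∑ s ∈ Finset.Icc 1 m, (m.choose s : ℂ) *
          ((n : ℂ) ^ (m - s) / (((1:ℂ) - α^h)*(1 - β^h)) ^ (s + 1)) *
          ∑ c ∈ range (s + 2), (-1 : ℂ) ^ c * ((s + 1).choose c : ℂ) * (α*β) ^ (h * c) *
            ∑ j ∈ range (s + 1), ((eulerianA s j : ℤ) : ℂ) * α^((h:ℤ) * ((j : ℤ) - (c:ℤ) + (n:ℤ)) + r))
        + B * (∑ s ∈ Finset.Icc 1 m, (m.choose s : ℂ) *
          ((n : ℂ) ^ (m - s) / (((1:ℂ) - α^h)*(1 - β^h)) ^ (s + 1)) *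
          ∑ c ∈ range (s + 2), (-1 : ℂ) ^ c * ((s + 1).choose c : ℂ) * (α*β) ^ (h * c) *
            ∑ j ∈ range (s + 1), ((eulerianA s j : ℤ) : ℂ) * β^((h:ℤ) * ((j : ℤ) - (c:ℤ) + (n:ℤ)) + r)) := by
    rw [Finset.mul_sum, Finset.mul_sum, ← Finset.sum_add_distrib]
    apply sum_congr rfl; intro s _
    rw [hsplitC s (fun c j => (h:ℤ) * ((j : ℤ) - (c:ℤ) + (n:ℤ)) + r)]
    ring
  rw [hsplit1, hsplitC m (fun c j => (h:ℤ) * ((j : ℤ) - (c:ℤ)) + r), hsplit4]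
  linear_combination A * PRα + B * PRβ
end
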